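/- Donsker–Varadhan-type lower bound (finite case): let P, Q be probability vectors on {1,…,k} with strictly positive entries, let g : {1,…,k} → ℝ be σ-subgaussian under Q (i.e., E_Q[exp(ρ(g − E_Q g))] ≤ exp(ρ²σ²/2) for all ρ). Then KL(P‖Q) ≥ sup_{t ∈ ℝ} [t·(E_P[g] − E_Q[g]) − t²σ²/2] = (E_P[g] − E_Q[g])²/(2σ²). Consequently |E_P[g] − E_Q[g]| ≤ σ·√(2·KL(P‖Q)). -/
import Mathlib


open Real Finset

/-- Donsker–Varadhan-type lower bound in the finite case, and its consequences. -/
theorem donsker_varadhan_finite (k : ℕ) (P Q : Fin k → ℝ)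
    (hP : ∀ j, 0 < P j) (hQ : ∀ j, 0 < Q j)
    (hPs : ∑ j, P j = 1) (hQs : ∑ j, Q j = 1)
    (g : Fin k → ℝ) (σ : ℝ) (hσ : 0 < σ)
    (hsub : ∀ ρ : ℝ, ∑ j, Q j * Real.exp (ρ * (g j - ∑ j', Q j' * g j')) ≤
      Real.exp (ρ ^ 2 * σ ^ 2 / 2)) :
    (∀ t : ℝ, t * ((∑ j, P j * g j) - ∑ j, Q j * g j) - t ^ 2 * σ ^ 2 / 2 ≤
        ∑ j, P j * Real.log (P j / Q j)) ∧
    ((∑ j, P j * g j) - ∑ j, Q j * g j) ^ 2 / (2 * σ ^ 2) ≤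
      (∑ j, P j * Real.log (P j / Q j)) ∧
    |(∑ j, P j * g j) - ∑ j, Q j * g j| ≤
      σ * Real.sqrt (2 * ∑ j, P j * Real.log (P j / Q j)) := by
  set m : ℝ := ∑ j', Q j' * g j' with hm
  set KL : ℝ := ∑ j, P j * Real.log (P j / Q j) with hKL
  set Δ : ℝ := (∑ j, P j * g j) - m with hΔ
  have key : ∀ t : ℝ, t * Δ - t ^ 2 * σ ^ 2 / 2 ≤ KL := by
    intro t
    set Z : ℝ := ∑ j, Q j * Real.exp (t * (g j - m)) with hZ
    have hne : (Finset.univ : Finset (Fin k)).Nonempty := by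
      rcases Finset.eq_empty_or_nonempty (Finset.univ : Finset (Fin k)) with h | h
      · rw [h] at hPs; simp at hPs
      · exact h
    have hZpos : 0 < Z :=
      Finset.sum_pos (fun j _ => mul_pos (hQ j) (Real.exp_pos _)) hne
    have hZle : Z ≤ Real.exp (t ^ 2 * σ ^ 2 / 2) := hsub t
    have hlogZ : Real.log Z ≤ t ^ 2 * σ ^ 2 / 2 := by
      calc Real.log Z ≤ Real.log (Real.exp (t ^ 2 * σ ^ 2 / 2)) :=
            Real.log_le_log hZpos hZle
        _ = t ^ 2 * σ ^ 2 / 2 := Real.log_exp _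
    -- Gibbs / Donsker-Varadhan core inequality
    have core : ∑ j, P j * (t * (g j - m)) - Real.log Z ≤ KL := by
      have pointwise : ∀ j : Fin k,
          P j - Q j * Real.exp (t * (g j - m)) / Z ≤
            P j * (Real.log (P j / Q j) - t * (g j - m) + Real.log Z) := by
        intro j
        have hx : 0 < Q j * Real.exp (t * (g j - m)) / (P j * Z) :=
          div_pos (mul_pos (hQ j) (Real.exp_pos _)) (mul_pos (hP j) hZpos)
        have hlog : Real.log (Q j * Real.exp (t * (g j - m)) / (P j * Z)) ≤
            Q j * Real.exp (t * (g j - m)) / (P j * Z) - 1 :=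
          Real.log_le_sub_one_of_pos hx
        have hexpand : Real.log (Q j * Real.exp (t * (g j - m)) / (P j * Z)) =
            -(Real.log (P j / Q j) - t * (g j - m) + Real.log Z) := by
          rw [Real.log_div (ne_of_gt (mul_pos (hQ j) (Real.exp_pos _)))
              (ne_of_gt (mul_pos (hP j) hZpos)),
            Real.log_mul (ne_of_gt (hQ j)) (ne_of_gt (Real.exp_pos _)),
            Real.log_mul (ne_of_gt (hP j)) (ne_of_gt hZpos), Real.log_exp,
            Real.log_div (ne_of_gt (hP j)) (ne_of_gt (hQ j))]
          ring
        rw [hexpand] at hlog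
        have h1 : 1 - Q j * Real.exp (t * (g j - m)) / (P j * Z) ≤
            Real.log (P j / Q j) - t * (g j - m) + Real.log Z := by linarith
        have := mul_le_mul_of_nonneg_left h1 (le_of_lt (hP j))
        calc P j - Q j * Real.exp (t * (g j - m)) / Z
            = P j * (1 - Q j * Real.exp (t * (g j - m)) / (P j * Z)) := by
              rw [mul_sub (P j), mul_one]
              congr 1
              rw [mul_div_assoc', mul_div_mul_left _ _ (ne_of_gt (hP j))]
          _ ≤ P j * (Real.log (P j / Q j) - t * (g j - m) + Real.log Z) := this
      have hsum := Finset.sum_le_sum (fun j (_ : j ∈ Finset.univ) => pointwise j)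
      have hL : ∑ j, (P j - Q j * Real.exp (t * (g j - m)) / Z) = 0 := by
        rw [Finset.sum_sub_distrib, hPs]
        have : ∑ j, Q j * Real.exp (t * (g j - m)) / Z = Z / Z := by
          rw [← Finset.sum_div]
        rw [this, div_self (ne_of_gt hZpos)]
        ring
      have hR : ∑ j, P j * (Real.log (P j / Q j) - t * (g j - m) + Real.log Z) =
          KL - ∑ j, P j * (t * (g j - m)) + Real.log Z := by
        have : ∀ j : Fin k, P j * (Real.log (P j / Q j) - t * (g j - m) + Real.log Z) =
            P j * Real.log (P j / Q j) - P j * (t * (g j - m)) + P j * Real.log Z := by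
          intro j; ring
        rw [Finset.sum_congr rfl (fun j _ => this j), Finset.sum_add_distrib,
          Finset.sum_sub_distrib, ← Finset.sum_mul, hPs, one_mul]
      rw [hL, hR] at hsum
      linarith
    have hexp : ∑ j, P j * (t * (g j - m)) = t * Δ := by
      have : ∀ j : Fin k, P j * (t * (g j - m)) = t * (P j * g j) - (t * m) * P j := by
        intro j; ring
      rw [Finset.sum_congr rfl (fun j _ => this j), Finset.sum_sub_distrib,
        ← Finset.mul_sum, ← Finset.mul_sum, hPs, mul_one, hΔ]
      ring
    rw [hexp] at core
    have hmono : t * Δ - t ^ 2 * σ ^ 2 / 2 ≤ t * Δ - Real.log Z := by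
      linarith only [hlogZ]
    exact le_trans hmono core
  have hσ2 : (0:ℝ) < σ ^ 2 := by positivity
  have part2 : Δ ^ 2 / (2 * σ ^ 2) ≤ KL := by
    have := key (Δ / σ ^ 2)
    have heq : Δ / σ ^ 2 * Δ - (Δ / σ ^ 2) ^ 2 * σ ^ 2 / 2 = Δ ^ 2 / (2 * σ ^ 2) := by
      field_simp
      ring
    rw [heq] at this
    exact this
  refine ⟨key, part2, ?_⟩
  have hKLnn : 0 ≤ KL := le_trans (by positivity) part2
  have hΔ2 : Δ ^ 2 ≤ σ ^ 2 * (2 * KL) := by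
    rw [div_le_iff₀ (by positivity)] at part2
    nlinarith
  calc |Δ| = Real.sqrt (Δ ^ 2) := (Real.sqrt_sq_eq_abs Δ).symm
    _ ≤ Real.sqrt (σ ^ 2 * (2 * KL)) := Real.sqrt_le_sqrt hΔ2
    _ = σ * Real.sqrt (2 * KL) := by
        rw [Real.sqrt_mul (by positivity), Real.sqrt_sq (le_of_lt hσ)]
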